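/- arXiv:2205.11296 — 6 statements merged into one kernel-verified Lean document; each statement's English description precedes it below -/
import Mathlib

section
/- Let Γ₁ and Γ₂ be groups such that for every nonidentity element x of Γ₁ (resp. Γ₂) the centralizer of x is infinite cyclic (isomorphic to ℤ). Suppose ψ is an automorphism of Γ := Γ₁ × Γ₂ and Γ₁ is not isomorphic to ℤ. Then for every h ∈ Γ₂, ψ(1,h) lies in {1} × Γ₂ or in Γ₁ × {1}. -/
theorem aut_prod_factor {Γ₁ Γ₂ : Type*} [Group Γ₁] [Group Γ₂]
    (hc₁ : ∀ x : Γ₁, x ≠ 1 → Nonempty (Subgroup.centralizer ({x} : Set Γ₁) ≃* Multiplicative ℤ))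
    (hc₂ : ∀ x : Γ₂, x ≠ 1 → Nonempty (Subgroup.centralizer ({x} : Set Γ₂) ≃* Multiplicative ℤ))
    (hΓ₁ : ¬ Nonempty (Γ₁ ≃* Multiplicative ℤ))
    (ψ : (Γ₁ × Γ₂) ≃* (Γ₁ × Γ₂)) :
    ∀ h : Γ₂, (ψ (1, h)).1 = 1 ∨ (ψ (1, h)).2 = 1 := by
  intro h
  by_contra hcon
  push_neg at hcon
  obtain ⟨ha, hb⟩ := hcon
  set a := (ψ (1, h)).1 with hA
  set b := (ψ (1, h)).2 with hB
  obtain ⟨ea⟩ := hc₁ a ha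
  obtain ⟨eb⟩ := hc₂ b hb
  have cA : ∀ u v : Subgroup.centralizer ({a} : Set Γ₁), u * v = v * u := fun u v =>
    ea.injective (by rw [map_mul, map_mul, mul_comm])
  have cB : ∀ u v : Subgroup.centralizer ({b} : Set Γ₂), u * v = v * u := fun u v =>
    eb.injective (by rw [map_mul, map_mul, mul_comm])
  -- ψ maps Γ₁ × {1} into C(a) × C(b)
  have key : ∀ z : Γ₁, (ψ (z, 1)).1 ∈ Subgroup.centralizer ({a} : Set Γ₁) ∧
      (ψ (z, 1)).2 ∈ Subgroup.centralizer ({b} : Set Γ₂) := by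
    intro z
    have hcomm : ((z, (1 : Γ₂)) : Γ₁ × Γ₂) * (1, h) = (1, h) * (z, 1) := by
      simp [Prod.ext_iff]
    have hψ : ψ (z, 1) * ψ (1, h) = ψ (1, h) * ψ (z, 1) := by
      rw [← map_mul, ← map_mul, hcomm]
    have h1 := congrArg Prod.fst hψ
    have h2 := congrArg Prod.snd hψ
    simp only [Prod.fst_mul, Prod.snd_mul] at h1 h2
    constructor
    · rw [Subgroup.mem_centralizer_iff]
      intro g hg
      rw [Set.mem_singleton_iff] at hg
      subst hg
      exact h1.symm
    · rw [Subgroup.mem_centralizer_iff]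
      intro g hg
      rw [Set.mem_singleton_iff] at hg
      subst hg
      exact h2.symm
  -- Γ₁ is abelian
  have comm : ∀ x y : Γ₁, x * y = y * x := by
    intro x y
    have hx := key x
    have hy := key y
    have h1 : (ψ (x, 1)).1 * (ψ (y, 1)).1 = (ψ (y, 1)).1 * (ψ (x, 1)).1 := by
      have := cA ⟨_, hx.1⟩ ⟨_, hy.1⟩
      exact congrArg Subtype.val this
    have h2 : (ψ (x, 1)).2 * (ψ (y, 1)).2 = (ψ (y, 1)).2 * (ψ (x, 1)).2 := by
      have := cB ⟨_, hx.2⟩ ⟨_, hy.2⟩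
      exact congrArg Subtype.val this
    have hmul : ψ (x, 1) * ψ (y, 1) = ψ (y, 1) * ψ (x, 1) := by
      ext
      · simpa using h1
      · simpa using h2
    have : ψ ((x, (1 : Γ₂)) * (y, 1)) = ψ ((y, (1 : Γ₂)) * (x, 1)) := by
      rw [map_mul, map_mul, hmul]
    have := ψ.injective this
    have := congrArg Prod.fst this
    simpa using this
  -- Then C(a) = ⊤ so Γ₁ ≅ ℤ, contradiction
  have htop : Subgroup.centralizer ({a} : Set Γ₁) = ⊤ := by
    ext g
    simp only [Subgroup.mem_top, iff_true]
    rw [Subgroup.mem_centralizer_iff]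
    intro g' hg'
    rw [Set.mem_singleton_iff] at hg'
    subst hg'
    exact comm a g
  exact hΓ₁ ⟨(Subgroup.topEquiv.symm.trans (MulEquiv.subgroupCongr htop.symm)).trans ea⟩
end

section
/- Let Γ₁ and Γ₂ be groups in which every nontrivial element has centralizer isomorphic to ℤ, and suppose Γ₁ and Γ₂ are not isomorphic to each other and neither is isomorphic to ℤ. Then every automorphism ψ of Γ₁ × Γ₂ satisfies ψ({1} × Γ₂) = {1} × Γ₂ and ψ(Γ₁ × {1}) = Γ₁ × {1}, hence ψ splits as a product ψ₁ × ψ₂ of automorphisms of the factors. -/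
private lemma comm_of_equiv_int {G : Type*} [Group G]
    (hc : ∀ x : G, x ≠ 1 → Nonempty (Subgroup.centralizer ({x} : Set G) ≃* Multiplicative ℤ))
    {x a b : G} (hx : x ≠ 1) (ha : a * x = x * a) (hb : b * x = x * b) :
    a * b = b * a := by
  obtain ⟨e⟩ := hc x hx
  have ha' : a ∈ Subgroup.centralizer ({x} : Set G) := by
    rw [Subgroup.mem_centralizer_iff]
    intro y hy
    rw [Set.mem_singleton_iff] at hy
    subst hy; exact ha.symm
  have hb' : b ∈ Subgroup.centralizer ({x} : Set G) := by
    rw [Subgroup.mem_centralizer_iff]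
    intro y hy
    rw [Set.mem_singleton_iff] at hy
    subst hy; exact hb.symm
  have : e ⟨a, ha'⟩ * e ⟨b, hb'⟩ = e ⟨b, hb'⟩ * e ⟨a, ha'⟩ := mul_comm _ _
  rw [← map_mul, ← map_mul] at this
  have := e.injective this
  have := congrArg Subtype.val this
  simpa using this

private lemma exists_noncomm {G : Type*} [Group G] [Nontrivial G]
    (hc : ∀ x : G, x ≠ 1 → Nonempty (Subgroup.centralizer ({x} : Set G) ≃* Multiplicative ℤ))
    (hG : ¬ Nonempty (G ≃* Multiplicative ℤ)) :
    ∃ a b : G, a * b ≠ b * a := by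
  by_contra h
  push_neg at h
  obtain ⟨x, hx⟩ := exists_ne (1 : G)
  obtain ⟨e⟩ := hc x hx
  have htop : Subgroup.centralizer ({x} : Set G) = ⊤ := by
    ext a
    simp only [Subgroup.mem_top, iff_true, Subgroup.mem_centralizer_iff]
    intro y hy
    exact h y a
  exact hG ⟨(Subgroup.topEquiv.symm.trans (MulEquiv.subgroupCongr htop.symm)).trans e⟩

set_option maxHeartbeats 1000000 in
theorem aut_prod_splits {Γ₁ Γ₂ : Type*} [Group Γ₁] [Group Γ₂]
    (hc₁ : ∀ x : Γ₁, x ≠ 1 → Nonempty (Subgroup.centralizer ({x} : Set Γ₁) ≃* Multiplicative ℤ))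
    (hc₂ : ∀ x : Γ₂, x ≠ 1 → Nonempty (Subgroup.centralizer ({x} : Set Γ₂) ≃* Multiplicative ℤ))
    (hne : ¬ Nonempty (Γ₁ ≃* Γ₂))
    (hΓ₁ : ¬ Nonempty (Γ₁ ≃* Multiplicative ℤ))
    (hΓ₂ : ¬ Nonempty (Γ₂ ≃* Multiplicative ℤ))
    (ψ : (Γ₁ × Γ₂) ≃* (Γ₁ × Γ₂)) :
    (Subgroup.map ψ.toMonoidHom (((⊥ : Subgroup Γ₁).prod (⊤ : Subgroup Γ₂)))
        = (⊥ : Subgroup Γ₁).prod (⊤ : Subgroup Γ₂)) ∧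
    (Subgroup.map ψ.toMonoidHom (((⊤ : Subgroup Γ₁).prod (⊥ : Subgroup Γ₂)))
        = (⊤ : Subgroup Γ₁).prod (⊥ : Subgroup Γ₂)) ∧
    ∃ (ψ₁ : Γ₁ ≃* Γ₁) (ψ₂ : Γ₂ ≃* Γ₂), ∀ g : Γ₁, ∀ h : Γ₂, ψ (g, h) = (ψ₁ g, ψ₂ h) := by
  classical
  -- degenerate cases first
  rcases subsingleton_or_nontrivial Γ₁ with hΓ₁t | hΓ₁nt
  · rcases subsingleton_or_nontrivial Γ₂ with hΓ₂t | hΓ₂nt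
    · -- both trivial: Γ₁ ≃* Γ₂, contradiction
      refine absurd ⟨?_⟩ hne
      exact
        { toFun := fun _ => 1
          invFun := fun _ => 1
          left_inv := fun a => Subsingleton.elim _ _
          right_inv := fun a => Subsingleton.elim _ _
          map_mul' := fun a b => Subsingleton.elim _ _ }
    · -- Γ₁ trivial
      have hbp : (⊥ : Subgroup Γ₁).prod (⊤ : Subgroup Γ₂) = ⊤ := by
        ext x
        rw [Subgroup.mem_prod, Subgroup.mem_bot]
        simp [Subsingleton.elim x.1 1]
      have htb : (⊤ : Subgroup Γ₁).prod (⊥ : Subgroup Γ₂) = ⊥ := by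
        ext x
        rw [Subgroup.mem_prod, Subgroup.mem_bot, Subgroup.mem_bot]
        constructor
        · rintro ⟨-, hx2⟩
          exact Prod.ext (Subsingleton.elim _ _) hx2
        · rintro rfl
          exact ⟨Subgroup.mem_top _, rfl⟩
      refine ⟨?_, ?_, ?_⟩
      · rw [hbp, Subgroup.map_top_of_surjective _ ψ.surjective]
      · rw [htb, Subgroup.map_bot]
      · -- ψ₂ h := (ψ (1,h)).2
        have hfst : ∀ x : Γ₁ × Γ₂, x = (1, x.2) :=
          fun x => Prod.ext (Subsingleton.elim _ _) rfl
        let F : Γ₂ →* Γ₂ :=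
          { toFun := fun h => (ψ (1, h)).2
            map_one' := by simp [show (((1 : Γ₁), (1 : Γ₂)) : Γ₁ × Γ₂) = 1 from rfl]
            map_mul' := by
              intro a b
              show (ψ (1, a * b)).2 = (ψ (1, a)).2 * (ψ (1, b)).2
              have : ((1 : Γ₁), a * b) = (1, a) * (1, b) := by simp
              rw [this, map_mul, Prod.snd_mul] }
        have hinj : Function.Injective F := by
          intro a b hab
          have : ψ (1, a) = ψ (1, b) := by
            rw [hfst (ψ (1, a)), hfst (ψ (1, b))]
            exact congrArg _ hab
          have := ψ.injective this
          exact congrArg Prod.snd this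
        have hsurj : Function.Surjective F := by
          intro b
          refine ⟨(ψ.symm (1, b)).2, ?_⟩
          show (ψ (1, (ψ.symm (1, b)).2)).2 = b
          rw [← hfst (ψ.symm (1, b)), MulEquiv.apply_symm_apply]
        refine ⟨MulEquiv.refl Γ₁, MulEquiv.ofBijective F ⟨hinj, hsurj⟩, ?_⟩
        intro g h
        have hg : g = 1 := Subsingleton.elim _ _
        subst hg
        exact (hfst (ψ (1, h))).trans (Prod.ext (Subsingleton.elim _ _) rfl)
  rcases subsingleton_or_nontrivial Γ₂ with hΓ₂t | hΓ₂nt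
  · -- Γ₂ trivial
    have hbp : (⊥ : Subgroup Γ₁).prod (⊤ : Subgroup Γ₂) = ⊥ := by
      ext x
      rw [Subgroup.mem_prod, Subgroup.mem_bot, Subgroup.mem_bot]
      constructor
      · rintro ⟨hx1, -⟩
        exact Prod.ext hx1 (Subsingleton.elim _ _)
      · rintro rfl
        exact ⟨rfl, Subgroup.mem_top _⟩
    have htb : (⊤ : Subgroup Γ₁).prod (⊥ : Subgroup Γ₂) = ⊤ := by
      ext x
      rw [Subgroup.mem_prod, Subgroup.mem_bot]
      simp [Subsingleton.elim x.2 1]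
    refine ⟨?_, ?_, ?_⟩
    · rw [hbp, Subgroup.map_bot]
    · rw [htb, Subgroup.map_top_of_surjective _ ψ.surjective]
    · have hsnd : ∀ x : Γ₁ × Γ₂, x = (x.1, 1) :=
        fun x => Prod.ext rfl (Subsingleton.elim _ _)
      let F : Γ₁ →* Γ₁ :=
        { toFun := fun g => (ψ (g, 1)).1
          map_one' := by simp [show (((1 : Γ₁), (1 : Γ₂)) : Γ₁ × Γ₂) = 1 from rfl]
          map_mul' := by
            intro a b
            show (ψ (a * b, 1)).1 = (ψ (a, 1)).1 * (ψ (b, 1)).1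
            have : (a * b, (1 : Γ₂)) = (a, 1) * (b, 1) := by simp
            rw [this, map_mul, Prod.fst_mul] }
      have hinj : Function.Injective F := by
        intro a b hab
        have : ψ (a, 1) = ψ (b, 1) := by
          rw [hsnd (ψ (a, 1)), hsnd (ψ (b, 1))]
          exact congrArg (fun t => (t, (1 : Γ₂))) hab
        have := ψ.injective this
        exact congrArg Prod.fst this
      have hsurj : Function.Surjective F := by
        intro b
        refine ⟨(ψ.symm (b, 1)).1, ?_⟩
        show (ψ ((ψ.symm (b, 1)).1, 1)).1 = b
        rw [← hsnd (ψ.symm (b, 1)), MulEquiv.apply_symm_apply]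
      refine ⟨MulEquiv.ofBijective F ⟨hinj, hsurj⟩, MulEquiv.refl Γ₂, ?_⟩
      intro g h
      have hh : h = 1 := Subsingleton.elim _ _
      subst hh
      exact (hsnd (ψ (g, 1))).trans (Prod.ext rfl (Subsingleton.elim _ _))
  -- MAIN CASE: both nontrivial
  obtain ⟨a₁, b₁, hab₁⟩ := exists_noncomm hc₁ hΓ₁
  obtain ⟨a₂, b₂, hab₂⟩ := exists_noncomm hc₂ hΓ₂
  -- P x : centralizer of x is abelian
  have hP : ∀ g : Γ₁, ∀ h : Γ₂, g ≠ 1 → h ≠ 1 → ∀ u v : Γ₁ × Γ₂,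
      u * (g, h) = (g, h) * u → v * (g, h) = (g, h) * v → u * v = v * u := by
    intro g h hg hh u v hu hv
    have hu1 : u.1 * g = g * u.1 := congrArg Prod.fst hu
    have hu2 : u.2 * h = h * u.2 := congrArg Prod.snd hu
    have hv1 : v.1 * g = g * v.1 := congrArg Prod.fst hv
    have hv2 : v.2 * h = h * v.2 := congrArg Prod.snd hv
    exact Prod.ext (comm_of_equiv_int hc₁ hg hu1 hv1) (comm_of_equiv_int hc₂ hh hu2 hv2)
  -- P transfers along automorphisms
  have hPinv : ∀ (φ : (Γ₁ × Γ₂) ≃* (Γ₁ × Γ₂)) (x : Γ₁ × Γ₂),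
      (∀ u v, u * x = x * u → v * x = x * v → u * v = v * u) →
      (∀ u v, u * (φ x) = (φ x) * u → v * (φ x) = (φ x) * v → u * v = v * u) := by
    intro φ x hx u v hu hv
    have hu' : (φ.symm u) * x = x * (φ.symm u) := by
      have := congrArg φ.symm hu
      simpa using this
    have hv' : (φ.symm v) * x = x * (φ.symm v) := by
      have := congrArg φ.symm hv
      simpa using this
    have := congrArg φ (hx _ _ hu' hv')
    simpa using this
  -- classification of images of pure elements
  have hpure₂ : ∀ h : Γ₂, h ≠ 1 → (ψ (1, h)).1 = 1 ∨ (ψ (1, h)).2 = 1 := by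
    intro h hh
    by_contra hcon
    push_neg at hcon
    have hPψ : ∀ u v : Γ₁ × Γ₂, u * ψ (1, h) = ψ (1, h) * u →
        v * ψ (1, h) = ψ (1, h) * v → u * v = v * u := by
      have := hP (ψ (1, h)).1 (ψ (1, h)).2 hcon.1 hcon.2
      simpa using this
    have hP1h := hPinv ψ.symm _ hPψ
    rw [MulEquiv.symm_apply_apply] at hP1h
    have h1 : ((a₁, (1 : Γ₂)) : Γ₁ × Γ₂) * (1, h) = (1, h) * (a₁, 1) := by
      simp [Prod.ext_iff]
    have h2 : ((b₁, (1 : Γ₂)) : Γ₁ × Γ₂) * (1, h) = (1, h) * (b₁, 1) := by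
      simp [Prod.ext_iff]
    have := hP1h _ _ h1 h2
    exact hab₁ (congrArg Prod.fst this)
  have hpure₁ : ∀ g : Γ₁, g ≠ 1 → (ψ (g, 1)).1 = 1 ∨ (ψ (g, 1)).2 = 1 := by
    intro g hg
    by_contra hcon
    push_neg at hcon
    have hPψ : ∀ u v : Γ₁ × Γ₂, u * ψ (g, 1) = ψ (g, 1) * u →
        v * ψ (g, 1) = ψ (g, 1) * v → u * v = v * u := by
      have := hP (ψ (g, 1)).1 (ψ (g, 1)).2 hcon.1 hcon.2
      simpa using this
    have hPg1 := hPinv ψ.symm _ hPψ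
    rw [MulEquiv.symm_apply_apply] at hPg1
    have h1 : (((1 : Γ₁), a₂) : Γ₁ × Γ₂) * (g, 1) = (g, 1) * (1, a₂) := by
      simp [Prod.ext_iff]
    have h2 : (((1 : Γ₁), b₂) : Γ₁ × Γ₂) * (g, 1) = (g, 1) * (1, b₂) := by
      simp [Prod.ext_iff]
    have := hPg1 _ _ h1 h2
    exact hab₂ (congrArg Prod.snd this)
  -- dichotomy for the Γ₂ factor
  have hdich₂ : (∀ h : Γ₂, (ψ (1, h)).1 = 1) ∨ (∀ h : Γ₂, (ψ (1, h)).2 = 1) := by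
    by_contra hcon
    push_neg at hcon
    obtain ⟨⟨h, hh1⟩, ⟨h', hh2⟩⟩ := hcon
    have hhne : h ≠ 1 := by rintro rfl; simp [show (((1 : Γ₁), (1 : Γ₂)) : Γ₁ × Γ₂) = 1 from rfl] at hh1
    have hh'ne : h' ≠ 1 := by rintro rfl; simp [show (((1 : Γ₁), (1 : Γ₂)) : Γ₁ × Γ₂) = 1 from rfl] at hh2
    have e1 : (ψ (1, h)).2 = 1 := (hpure₂ h hhne).resolve_left hh1
    have e2 : (ψ (1, h')).1 = 1 := (hpure₂ h' hh'ne).resolve_right hh2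
    have hmul : ψ ((1 : Γ₁), h * h') = ψ (1, h) * ψ (1, h') := by
      rw [← map_mul]
      congr 1
      simp
    by_cases hhh : h * h' = 1
    · rw [hhh] at hmul
      rw [show (((1 : Γ₁), (1 : Γ₂)) : Γ₁ × Γ₂) = 1 from rfl, map_one] at hmul
      have := congrArg Prod.fst hmul.symm
      rw [Prod.fst_mul, e2, mul_one] at this
      exact hh1 this
    · have hc1 : (ψ ((1 : Γ₁), h * h')).1 ≠ 1 := by
        rw [hmul, Prod.fst_mul, e2, mul_one]
        exact hh1
      have hc2 : (ψ ((1 : Γ₁), h * h')).2 ≠ 1 := by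
        rw [hmul, Prod.snd_mul, e1, one_mul]
        exact hh2
      rcases hpure₂ (h * h') hhh with hc | hc
      · exact hc1 hc
      · exact hc2 hc
  have hdich₁ : (∀ g : Γ₁, (ψ (g, 1)).1 = 1) ∨ (∀ g : Γ₁, (ψ (g, 1)).2 = 1) := by
    by_contra hcon
    push_neg at hcon
    obtain ⟨⟨g, hg1⟩, ⟨g', hg2⟩⟩ := hcon
    have hgne : g ≠ 1 := by rintro rfl; simp [show (((1 : Γ₁), (1 : Γ₂)) : Γ₁ × Γ₂) = 1 from rfl] at hg1
    have hg'ne : g' ≠ 1 := by rintro rfl; simp [show (((1 : Γ₁), (1 : Γ₂)) : Γ₁ × Γ₂) = 1 from rfl] at hg2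
    have e1 : (ψ (g, 1)).2 = 1 := (hpure₁ g hgne).resolve_left hg1
    have e2 : (ψ (g', 1)).1 = 1 := (hpure₁ g' hg'ne).resolve_right hg2
    have hmul : ψ (g * g', (1 : Γ₂)) = ψ (g, 1) * ψ (g', 1) := by
      rw [← map_mul]
      congr 1
      simp
    by_cases hgg : g * g' = 1
    · rw [hgg] at hmul
      rw [show (((1 : Γ₁), (1 : Γ₂)) : Γ₁ × Γ₂) = 1 from rfl, map_one] at hmul
      have := congrArg Prod.fst hmul.symm
      rw [Prod.fst_mul, e2, mul_one] at this
      exact hg1 this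
    · have hc1 : (ψ (g * g', (1 : Γ₂))).1 ≠ 1 := by
        rw [hmul, Prod.fst_mul, e2, mul_one]
        exact hg1
      have hc2 : (ψ (g * g', (1 : Γ₂))).2 ≠ 1 := by
        rw [hmul, Prod.snd_mul, e1, one_mul]
        exact hg2
      rcases hpure₁ (g * g') hgg with hc | hc
      · exact hc1 hc
      · exact hc2 hc
  -- general multiplicativity
  have hsplit : ∀ (g : Γ₁) (h : Γ₂), ψ (g, h) = ψ (g, 1) * ψ (1, h) := by
    intro g h
    rw [← map_mul]
    congr 1
    simp
  rcases hdich₂ with hA | hA <;> rcases hdich₁ with hB | hB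
  · -- everything has trivial first component: contradiction with surjectivity
    exfalso
    obtain ⟨g₀, hg₀⟩ := exists_ne (1 : Γ₁)
    have hx : ψ (ψ.symm (g₀, (1 : Γ₂))) = (g₀, 1) := ψ.apply_symm_apply _
    set x := ψ.symm (g₀, (1 : Γ₂)) with hxdef
    have h1 : (ψ (x.1, x.2)).1 = 1 := by
      rw [hsplit, Prod.fst_mul, hA, hB, mul_one]
    rw [show ((x.1, x.2) : Γ₁ × Γ₂) = x from rfl, hx] at h1
    exact hg₀ h1
  · -- GOOD CASE : hA : first components of ψ(1,·) trivial, hB : second of ψ(·,1) trivial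
    have key : ∀ (g : Γ₁) (h : Γ₂), ψ (g, h) = ((ψ (g, 1)).1, (ψ (1, h)).2) := by
      intro g h
      rw [hsplit]
      refine Prod.ext ?_ ?_
      · rw [Prod.fst_mul, hA, mul_one]
      · rw [Prod.snd_mul, hB, one_mul]
    have hone : ψ (((1 : Γ₁), (1 : Γ₂)) : Γ₁ × Γ₂) = 1 := map_one ψ
    let F : Γ₁ →* Γ₁ :=
      { toFun := fun g => (ψ (g, 1)).1
        map_one' := by
          show (ψ ((1 : Γ₁), (1 : Γ₂))).1 = 1
          rw [hone, Prod.fst_one]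
        map_mul' := by
          intro a b
          show (ψ (a * b, 1)).1 = (ψ (a, 1)).1 * (ψ (b, 1)).1
          have : (a * b, (1 : Γ₂)) = (a, 1) * (b, 1) := by simp
          rw [this, map_mul, Prod.fst_mul] }
    let K : Γ₂ →* Γ₂ :=
      { toFun := fun h => (ψ (1, h)).2
        map_one' := by
          show (ψ ((1 : Γ₁), (1 : Γ₂))).2 = 1
          rw [hone, Prod.snd_one]
        map_mul' := by
          intro a b
          show (ψ (1, a * b)).2 = (ψ (1, a)).2 * (ψ (1, b)).2
          have : ((1 : Γ₁), a * b) = (1, a) * (1, b) := by simp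
          rw [this, map_mul, Prod.snd_mul] }
    have hF1 : (ψ (((1 : Γ₁), (1 : Γ₂)) : Γ₁ × Γ₂)).1 = 1 := by rw [hone, Prod.fst_one]
    have hK1 : (ψ (((1 : Γ₁), (1 : Γ₂)) : Γ₁ × Γ₂)).2 = 1 := by rw [hone, Prod.snd_one]
    have hFinj : Function.Injective F := by
      intro a b hab
      have h1 : ψ (a, 1) = ψ (b, 1) := by
        rw [key a 1, key b 1]
        exact Prod.ext hab rfl
      have := ψ.injective h1
      exact congrArg Prod.fst this
    have hKinj : Function.Injective K := by
      intro a b hab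
      have h1 : ψ (1, a) = ψ (1, b) := by
        rw [key 1 a, key 1 b]
        exact Prod.ext rfl hab
      have := ψ.injective h1
      exact congrArg Prod.snd this
    have hFsurj : Function.Surjective F := by
      intro b
      refine ⟨(ψ.symm (b, (1 : Γ₂))).1, ?_⟩
      have h1 := key (ψ.symm (b, (1 : Γ₂))).1 (ψ.symm (b, (1 : Γ₂))).2
      rw [show (((ψ.symm (b, (1:Γ₂))).1, (ψ.symm (b, (1:Γ₂))).2) : Γ₁ × Γ₂) = ψ.symm (b, (1:Γ₂))
        from rfl, MulEquiv.apply_symm_apply] at h1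
      exact (congrArg Prod.fst h1).symm
    have hKsurj : Function.Surjective K := by
      intro b
      refine ⟨(ψ.symm ((1 : Γ₁), b)).2, ?_⟩
      have h1 := key (ψ.symm ((1 : Γ₁), b)).1 (ψ.symm ((1 : Γ₁), b)).2
      rw [show (((ψ.symm ((1:Γ₁), b)).1, (ψ.symm ((1:Γ₁), b)).2) : Γ₁ × Γ₂) = ψ.symm ((1:Γ₁), b)
        from rfl, MulEquiv.apply_symm_apply] at h1
      exact (congrArg Prod.snd h1).symm
    refine ⟨?_, ?_, MulEquiv.ofBijective F ⟨hFinj, hFsurj⟩,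
      MulEquiv.ofBijective K ⟨hKinj, hKsurj⟩, fun g h => key g h⟩
    · ext u
      constructor
      · rintro ⟨x, hx, rfl⟩
        have hx1 : x.1 = 1 := Subgroup.mem_bot.mp (Subgroup.mem_prod.mp hx).1
        refine Subgroup.mem_prod.mpr ⟨Subgroup.mem_bot.mpr ?_, Subgroup.mem_top _⟩
        show (ψ x).1 = 1
        have h1 := key x.1 x.2
        rw [show ((x.1, x.2) : Γ₁ × Γ₂) = x from rfl] at h1
        rw [hx1] at h1
        rw [h1]
        exact hF1
      · intro hu
        have hu1 : u.1 = 1 := Subgroup.mem_bot.mp (Subgroup.mem_prod.mp hu).1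
        obtain ⟨h, hh⟩ := hKsurj u.2
        refine ⟨(1, h), Subgroup.mem_prod.mpr ⟨Subgroup.mem_bot.mpr rfl, Subgroup.mem_top _⟩, ?_⟩
        show ψ (1, h) = u
        rw [key]
        exact Prod.ext (hF1.trans hu1.symm) hh
    · ext u
      constructor
      · rintro ⟨x, hx, rfl⟩
        have hx2 : x.2 = 1 := Subgroup.mem_bot.mp (Subgroup.mem_prod.mp hx).2
        refine Subgroup.mem_prod.mpr ⟨Subgroup.mem_top _, Subgroup.mem_bot.mpr ?_⟩
        show (ψ x).2 = 1
        have h1 := key x.1 x.2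
        rw [show ((x.1, x.2) : Γ₁ × Γ₂) = x from rfl] at h1
        rw [hx2] at h1
        rw [h1]
        exact hK1
      · intro hu
        have hu2 : u.2 = 1 := Subgroup.mem_bot.mp (Subgroup.mem_prod.mp hu).2
        obtain ⟨g, hg⟩ := hFsurj u.1
        refine ⟨(g, 1), Subgroup.mem_prod.mpr ⟨Subgroup.mem_top _, Subgroup.mem_bot.mpr rfl⟩, ?_⟩
        show ψ (g, 1) = u
        rw [key]
        exact Prod.ext hg (hK1.trans hu2.symm)
  · -- SWAP CASE : hA : ∀ h, (ψ (1,h)).2 = 1, hB : ∀ g, (ψ (g,1)).1 = 1 ; get Γ₁ ≃* Γ₂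
    exfalso
    have key : ∀ (g : Γ₁) (h : Γ₂), ψ (g, h) = ((ψ (1, h)).1, (ψ (g, 1)).2) := by
      intro g h
      rw [hsplit]
      refine Prod.ext ?_ ?_
      · rw [Prod.fst_mul, hB, one_mul]
      · rw [Prod.snd_mul, hA, mul_one]
    let F : Γ₂ →* Γ₁ :=
      { toFun := fun h => (ψ (1, h)).1
        map_one' := by
          show (ψ ((1 : Γ₁), (1 : Γ₂))).1 = 1
          rw [show (((1 : Γ₁), (1 : Γ₂)) : Γ₁ × Γ₂) = 1 from rfl, map_one, Prod.fst_one]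
        map_mul' := by
          intro a b
          show (ψ (1, a * b)).1 = (ψ (1, a)).1 * (ψ (1, b)).1
          have : ((1 : Γ₁), a * b) = (1, a) * (1, b) := by simp
          rw [this, map_mul, Prod.fst_mul] }
    have hFinj : Function.Injective F := by
      intro a b hab
      have h1 : ψ (1, a) = ψ (1, b) := by
        rw [key 1 a, key 1 b]
        exact Prod.ext hab rfl
      have := ψ.injective h1
      exact congrArg Prod.snd this
    have hFsurj : Function.Surjective F := by
      intro b
      refine ⟨(ψ.symm (b, (1 : Γ₂))).2, ?_⟩
      have h1 := key (ψ.symm (b, (1 : Γ₂))).1 (ψ.symm (b, (1 : Γ₂))).2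
      rw [show (((ψ.symm (b, (1:Γ₂))).1, (ψ.symm (b, (1:Γ₂))).2) : Γ₁ × Γ₂) = ψ.symm (b, (1:Γ₂))
        from rfl, MulEquiv.apply_symm_apply] at h1
      exact (congrArg Prod.fst h1).symm
    exact hne ⟨(MulEquiv.ofBijective F ⟨hFinj, hFsurj⟩).symm⟩
  · -- everything has trivial second component: contradiction with surjectivity
    exfalso
    obtain ⟨h₀, hh₀⟩ := exists_ne (1 : Γ₂)
    have hx : ψ (ψ.symm ((1 : Γ₁), h₀)) = (1, h₀) := ψ.apply_symm_apply _
    set x := ψ.symm ((1 : Γ₁), h₀) with hxdef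
    have h1 : (ψ (x.1, x.2)).2 = 1 := by
      rw [hsplit, Prod.snd_mul, hA, hB, mul_one]
    rw [show ((x.1, x.2) : Γ₁ × Γ₂) = x from rfl, hx] at h1
    exact hh₀ h1
end

section
/- Let Γ₁ and Γ₂ be groups in which every nontrivial element has centralizer isomorphic to ℤ and neither Γ₁ nor Γ₂ is isomorphic to ℤ. Then for every automorphism ψ of Γ := Γ₁ × Γ₂, the square ψ² preserves each factor subgroup: ψ²({1} × Γ₂) = {1} × Γ₂ and ψ²(Γ₁ × {1}) = Γ₁ × {1}. -/
section Aux

variable {G H : Type*} [Group G] [Group H]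

/-- The centralizer of `x` is abelian. -/
private def abCent (x : G) : Prop := ∀ y z : G, Commute y x → Commute z x → Commute y z

private lemma abCent_map (e : G ≃* H) {x : G} (h : abCent x) : abCent (e x) := by
  intro y z hy hz
  have hy' : Commute (e.symm y) x := by
    have := congrArg e.symm hy
    simpa [map_mul, Commute, SemiconjBy] using this
  have hz' : Commute (e.symm z) x := by
    have := congrArg e.symm hz
    simpa [map_mul, Commute, SemiconjBy] using this
  have := congrArg e (h _ _ hy' hz')
  simpa [map_mul, Commute, SemiconjBy] using this

private lemma comm_of_cent {x : G}
    (h : Nonempty (Subgroup.centralizer ({x} : Set G) ≃* Multiplicative ℤ))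
    {y z : G} (hy : Commute y x) (hz : Commute z x) : Commute y z := by
  obtain ⟨f⟩ := h
  have hy' : y ∈ Subgroup.centralizer ({x} : Set G) :=
    Subgroup.mem_centralizer_singleton_iff.2 hy
  have hz' : z ∈ Subgroup.centralizer ({x} : Set G) :=
    Subgroup.mem_centralizer_singleton_iff.2 hz
  have : f (⟨y, hy'⟩ * ⟨z, hz'⟩) = f (⟨z, hz'⟩ * ⟨y, hy'⟩) := by
    rw [map_mul, map_mul, mul_comm]
  have := f.injective this
  exact congrArg Subtype.val this

private lemma subgroup_le_union {K A B : Subgroup G}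
    (h : (K : Set G) ⊆ (A : Set G) ∪ (B : Set G)) : K ≤ A ∨ K ≤ B := by
  by_contra hc
  push_neg at hc
  obtain ⟨h1, h2⟩ := hc
  obtain ⟨k₁, hk₁K, hk₁⟩ := SetLike.not_le_iff_exists.1 h1
  obtain ⟨k₂, hk₂K, hk₂⟩ := SetLike.not_le_iff_exists.1 h2
  have hk₁B : k₁ ∈ B := (h hk₁K).resolve_left hk₁
  have hk₂A : k₂ ∈ A := (h hk₂K).resolve_right hk₂
  rcases h (K.mul_mem hk₁K hk₂K) with hAB | hAB
  · exact hk₁ (by simpa using A.mul_mem hAB (A.inv_mem hk₂A))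
  · exact hk₂ (by simpa using B.mul_mem (B.inv_mem hk₁B) hAB)

private lemma le_of_map_le (φ : G ≃* G) {A B : Subgroup G}
    (h : A.map φ.toMonoidHom ≤ B.map φ.toMonoidHom) : A ≤ B := by
  intro x hx
  obtain ⟨y, hy, hyx⟩ := h ⟨x, hx, rfl⟩
  rwa [← φ.injective hyx]

private lemma map_le_iff (φ : G ≃* G) (A B : Subgroup G) :
    A.map φ.toMonoidHom ≤ B ↔ A ≤ B.map φ.symm.toMonoidHom := by
  constructor
  · intro h x hx
    exact ⟨φ x, h ⟨x, hx, rfl⟩, by simp⟩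
  · rintro h x ⟨y, hy, rfl⟩
    obtain ⟨b, hb, hb'⟩ := h hy
    have : (φ y : G) = b := by rw [← hb']; simp
    rwa [MulEquiv.coe_toMonoidHom, this]

private lemma map_symm_map (φ : G ≃* G) (A : Subgroup G) :
    (A.map φ.toMonoidHom).map φ.symm.toMonoidHom = A := by
  ext x
  constructor
  · rintro ⟨y, ⟨z, hz, rfl⟩, rfl⟩
    simpa using hz
  · intro hx
    exact ⟨φ x, ⟨x, hx, rfl⟩, by simp⟩

private lemma map_map_symm (φ : G ≃* G) (A : Subgroup G) :
    (A.map φ.symm.toMonoidHom).map φ.toMonoidHom = A := by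
  ext x
  constructor
  · rintro ⟨y, ⟨z, hz, rfl⟩, rfl⟩
    simpa using hz
  · intro hx
    exact ⟨φ.symm x, ⟨x, hx, rfl⟩, by simp⟩

private lemma nonab_of_cent {Γ : Type*} [Group Γ] [Nontrivial Γ]
    (hc : ∀ x : Γ, x ≠ 1 → Nonempty (Subgroup.centralizer ({x} : Set Γ) ≃* Multiplicative ℤ))
    (hΓ : ¬ Nonempty (Γ ≃* Multiplicative ℤ)) : ∃ u v : Γ, ¬ Commute u v := by
  by_contra hcomm
  push_neg at hcomm
  obtain ⟨x, hx⟩ := exists_ne (1 : Γ)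
  have hcent : Subgroup.centralizer ({x} : Set Γ) = ⊤ := by
    ext y
    simp only [Subgroup.mem_centralizer_singleton_iff, Subgroup.mem_top, iff_true]
    exact hcomm y x
  obtain ⟨f⟩ := hc x hx
  rw [hcent] at f
  exact hΓ ⟨Subgroup.topEquiv.symm.trans f⟩

end Aux

theorem aut_prod_square_preserves {Γ₁ Γ₂ : Type*} [Group Γ₁] [Group Γ₂]
    (hc₁ : ∀ x : Γ₁, x ≠ 1 → Nonempty (Subgroup.centralizer ({x} : Set Γ₁) ≃* Multiplicative ℤ))
    (hc₂ : ∀ x : Γ₂, x ≠ 1 → Nonempty (Subgroup.centralizer ({x} : Set Γ₂) ≃* Multiplicative ℤ))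
    (hΓ₁ : ¬ Nonempty (Γ₁ ≃* Multiplicative ℤ))
    (hΓ₂ : ¬ Nonempty (Γ₂ ≃* Multiplicative ℤ))
    (ψ : (Γ₁ × Γ₂) ≃* (Γ₁ × Γ₂)) :
    (Subgroup.map (ψ.trans ψ).toMonoidHom (((⊥ : Subgroup Γ₁).prod (⊤ : Subgroup Γ₂)))
        = (⊥ : Subgroup Γ₁).prod (⊤ : Subgroup Γ₂)) ∧
    (Subgroup.map (ψ.trans ψ).toMonoidHom (((⊤ : Subgroup Γ₁).prod (⊥ : Subgroup Γ₂)))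
        = (⊤ : Subgroup Γ₁).prod (⊥ : Subgroup Γ₂)) := by
  have hmapcomp : ∀ (K : Subgroup (Γ₁ × Γ₂)),
      Subgroup.map (ψ.trans ψ).toMonoidHom K
        = Subgroup.map ψ.toMonoidHom (Subgroup.map ψ.toMonoidHom K) := by
    intro K
    rw [Subgroup.map_map]
    rfl
  -- trivial factor cases
  rcases subsingleton_or_nontrivial Γ₁ with hS₁ | hN₁
  · have e1 : (⊥ : Subgroup Γ₁) = ⊤ := by
      ext x; simp [Subsingleton.elim x 1]
    have hsurj : Function.Surjective (ψ.trans ψ).toMonoidHom := (ψ.trans ψ).surjective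
    constructor
    · rw [e1, Subgroup.top_prod_top, Subgroup.map_top_of_surjective _ hsurj]
    · rw [← e1, Subgroup.bot_prod_bot, Subgroup.map_bot]
  rcases subsingleton_or_nontrivial Γ₂ with hS₂ | hN₂
  · have e2 : (⊥ : Subgroup Γ₂) = ⊤ := by
      ext x; simp [Subsingleton.elim x 1]
    have hsurj : Function.Surjective (ψ.trans ψ).toMonoidHom := (ψ.trans ψ).surjective
    constructor
    · rw [← e2, Subgroup.bot_prod_bot, Subgroup.map_bot]
    · rw [e2, Subgroup.top_prod_top, Subgroup.map_top_of_surjective _ hsurj]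
  obtain ⟨u₁, v₁, huv₁⟩ := nonab_of_cent hc₁ hΓ₁
  obtain ⟨u₂, v₂, huv₂⟩ := nonab_of_cent hc₂ hΓ₂
  set H₁ : Subgroup (Γ₁ × Γ₂) := (⊤ : Subgroup Γ₁).prod (⊥ : Subgroup Γ₂) with hH₁
  set H₂ : Subgroup (Γ₁ × Γ₂) := (⊥ : Subgroup Γ₁).prod (⊤ : Subgroup Γ₂) with hH₂
  have memH₁ : ∀ w : Γ₁ × Γ₂, w ∈ H₁ ↔ w.2 = 1 := by
    intro w; simp [hH₁, Subgroup.mem_prod, Subgroup.mem_bot]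
  have memH₂ : ∀ w : Γ₁ × Γ₂, w ∈ H₂ ↔ w.1 = 1 := by
    intro w; simp [hH₂, Subgroup.mem_prod, Subgroup.mem_bot]
  -- abelian centralizers off the factors
  have ab_of_both : ∀ w : Γ₁ × Γ₂, w.1 ≠ 1 → w.2 ≠ 1 → abCent w := by
    intro w h1 h2 y z hy hz
    have hy1 : Commute y.1 w.1 := congrArg Prod.fst hy
    have hy2 : Commute y.2 w.2 := congrArg Prod.snd hy
    have hz1 : Commute z.1 w.1 := congrArg Prod.fst hz
    have hz2 : Commute z.2 w.2 := congrArg Prod.snd hz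
    have c1 : Commute y.1 z.1 := comm_of_cent (hc₁ w.1 h1) hy1 hz1
    have c2 : Commute y.2 z.2 := comm_of_cent (hc₂ w.2 h2) hy2 hz2
    exact Prod.ext c1 c2
  -- nonabelian centralizers on the factors
  have nab₁ : ∀ w : Γ₁ × Γ₂, w.2 = 1 → ¬ abCent w := by
    intro w hw2 hab
    have h1 : Commute ((1, u₂) : Γ₁ × Γ₂) w := by
      apply Prod.ext <;> simp [Commute, SemiconjBy, hw2]
    have h2 : Commute ((1, v₂) : Γ₁ × Γ₂) w := by
      apply Prod.ext <;> simp [Commute, SemiconjBy, hw2]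
    have := congrArg Prod.snd (hab _ _ h1 h2)
    exact huv₂ (by simpa [Commute, SemiconjBy] using this)
  have nab₂ : ∀ w : Γ₁ × Γ₂, w.1 = 1 → ¬ abCent w := by
    intro w hw1 hab
    have h1 : Commute ((u₁, 1) : Γ₁ × Γ₂) w := by
      apply Prod.ext <;> simp [Commute, SemiconjBy, hw1]
    have h2 : Commute ((v₁, 1) : Γ₁ × Γ₂) w := by
      apply Prod.ext <;> simp [Commute, SemiconjBy, hw1]
    have := congrArg Prod.fst (hab _ _ h1 h2)
    exact huv₁ (by simpa [Commute, SemiconjBy] using this)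
  -- the union of factors is invariant under any automorphism
  have mapsS : ∀ (φ : (Γ₁ × Γ₂) ≃* (Γ₁ × Γ₂)) (w : Γ₁ × Γ₂),
      (w.1 = 1 ∨ w.2 = 1) → ((φ w).1 = 1 ∨ (φ w).2 = 1) := by
    intro φ w hw
    have hnab : ¬ abCent w := by
      rcases hw with h | h
      · exact nab₂ w h
      · exact nab₁ w h
    have hnab' : ¬ abCent (φ w) := by
      intro h
      have := abCent_map φ.symm h
      simp only [MulEquiv.symm_apply_apply] at this
      exact hnab this
    by_contra hc
    push_neg at hc
    exact hnab' (ab_of_both _ hc.1 hc.2)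
  -- dichotomies
  have d1 : ∀ (φ : (Γ₁ × Γ₂) ≃* (Γ₁ × Γ₂)),
      Subgroup.map φ.toMonoidHom H₁ ≤ H₁ ∨ Subgroup.map φ.toMonoidHom H₁ ≤ H₂ := by
    intro φ
    apply subgroup_le_union
    rintro x ⟨w, hw, rfl⟩
    rcases mapsS φ w (Or.inr ((memH₁ w).1 hw)) with h | h
    · exact Or.inr ((memH₂ _).2 h)
    · exact Or.inl ((memH₁ _).2 h)
  have d2 : ∀ (φ : (Γ₁ × Γ₂) ≃* (Γ₁ × Γ₂)),
      Subgroup.map φ.toMonoidHom H₂ ≤ H₁ ∨ Subgroup.map φ.toMonoidHom H₂ ≤ H₂ := by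
    intro φ
    apply subgroup_le_union
    rintro x ⟨w, hw, rfl⟩
    rcases mapsS φ w (Or.inl ((memH₂ w).1 hw)) with h | h
    · exact Or.inr ((memH₂ _).2 h)
    · exact Or.inl ((memH₁ _).2 h)
  have n12 : ¬ H₁ ≤ H₂ := by
    intro h
    obtain ⟨a, ha⟩ := exists_ne (1 : Γ₁)
    have := (memH₂ _).1 (h ((memH₁ ((a, 1) : Γ₁ × Γ₂)).2 rfl))
    exact ha this
  have n21 : ¬ H₂ ≤ H₁ := by
    intro h
    obtain ⟨b, hb⟩ := exists_ne (1 : Γ₂)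
    have := (memH₁ _).1 (h ((memH₂ ((1, b) : Γ₁ × Γ₂)).2 rfl))
    exact hb this
  have mli₁ : ∀ (A B : Subgroup (Γ₁ × Γ₂)),
      Subgroup.map ψ.symm.toMonoidHom A ≤ B ↔ A ≤ Subgroup.map ψ.toMonoidHom B := by
    intro A B
    have := map_le_iff ψ.symm A B
    simpa using this
  -- preserve or swap
  have key : (Subgroup.map ψ.toMonoidHom H₁ = H₁ ∧ Subgroup.map ψ.toMonoidHom H₂ = H₂)
      ∨ (Subgroup.map ψ.toMonoidHom H₁ = H₂ ∧ Subgroup.map ψ.toMonoidHom H₂ = H₁) := by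
    rcases d1 ψ with hA | hB
    · -- map ψ H₁ ≤ H₁ : preserve case
      left
      have e1 : Subgroup.map ψ.toMonoidHom H₁ = H₁ := by
        rcases d1 ψ.symm with h | h
        · exact le_antisymm hA ((mli₁ H₁ H₁).1 h)
        · exfalso
          have hle : H₁ ≤ Subgroup.map ψ.toMonoidHom H₂ := (mli₁ H₁ H₂).1 h
          rcases d2 ψ with h2 | h2
          · -- map ψ H₂ ≤ H₁ and map ψ H₁ ≤ H₁, H₁ ≤ map ψ H₂ so map ψ H₂ = H₁
            have : Subgroup.map ψ.toMonoidHom H₂ = H₁ := le_antisymm h2 hle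
            have : Subgroup.map ψ.toMonoidHom H₁ ≤ Subgroup.map ψ.toMonoidHom H₂ :=
              this ▸ hA
            exact n12 (le_of_map_le ψ this)
          · exact n12 (le_trans hle h2)
      refine ⟨e1, ?_⟩
      have hsm : Subgroup.map ψ.symm.toMonoidHom H₁ = H₁ := by
        rw [← e1, map_symm_map]; exact e1.symm
      rcases d2 ψ with h2 | h2
      · exfalso
        have := Subgroup.map_mono (f := ψ.symm.toMonoidHom) h2
        rw [map_symm_map, hsm] at this
        exact n21 this
      · refine le_antisymm h2 ?_
        rcases d2 ψ.symm with h3 | h3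
        · exfalso
          have := Subgroup.map_mono (f := ψ.toMonoidHom) h3
          rw [map_map_symm, e1] at this
          exact n21 this
        · exact (mli₁ H₂ H₂).1 h3
    · -- map ψ H₁ ≤ H₂ : swap case
      right
      have e1 : Subgroup.map ψ.toMonoidHom H₁ = H₂ := by
        rcases d2 ψ.symm with h | h
        · exact le_antisymm hB ((mli₁ H₂ H₁).1 h)
        · exfalso
          have hle : H₂ ≤ Subgroup.map ψ.toMonoidHom H₂ := (mli₁ H₂ H₂).1 h
          rcases d2 ψ with h2 | h2
          · exact n21 (le_trans hle h2)
          · have he : Subgroup.map ψ.toMonoidHom H₂ = H₂ := le_antisymm h2 hle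
            rw [← he] at hB
            exact n12 (le_of_map_le ψ hB)
      refine ⟨e1, ?_⟩
      have hsm : Subgroup.map ψ.symm.toMonoidHom H₂ = H₁ := by
        rw [← e1, map_symm_map]
      rcases d2 ψ with h2 | h2
      · refine le_antisymm h2 ?_
        rcases d1 ψ.symm with h3 | h3
        · exfalso
          have := Subgroup.map_mono (f := ψ.toMonoidHom) h3
          rw [map_map_symm, e1] at this
          exact n12 this
        · exact (mli₁ H₁ H₂).1 h3
      · exfalso
        have := Subgroup.map_mono (f := ψ.symm.toMonoidHom) h2
        rw [map_symm_map, hsm] at this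
        exact n21 this
  constructor
  · rw [hmapcomp]
    rcases key with ⟨k1, k2⟩ | ⟨k1, k2⟩
    · rw [k2, k2]
    · rw [k2, k1]
  · rw [hmapcomp]
    rcases key with ⟨k1, k2⟩ | ⟨k1, k2⟩
    · rw [k1, k1]
    · rw [k1, k2]
end

section
/- Let (X̃, d) be a metric space with a group Γ acting by isometries, and let F̃, G̃ : X̃ → X̃ be Γ-equivariant bijections (F̃(γx) = γF̃(x) for all γ ∈ Γ, and similarly for G̃) which moreover commute with the Γ-action in the same way. Suppose x̃, ỹ ∈ X̃ and t ∈ Γ satisfy F̃ⁿ(x̃) = t·x̃ and G̃ⁿ(ỹ) = t·ỹ for some n ≥ 1, and suppose that for every γ ∈ Γ and every k ∈ ℤ, F̃ᵏ ∘ γ ∘ F̃⁻ᵏ = G̃ᵏ ∘ γ ∘ G̃⁻ᵏ as maps (i.e., F̃ and G̃ induce the same automorphisms of Γ). Then the set {d(F̃ᵏ x̃, G̃ᵏ ỹ) : k ∈ ℤ} is finite; in fact d(F̃ᵏ x̃, G̃ᵏ ỹ) = d(F̃^(k mod n) x̃, G̃^(k mod n) ỹ) for all k ∈ ℤ. In particular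 sup over k ∈ ℤ of d(F̃ᵏ x̃, G̃ᵏ ỹ) is bounded. -/
theorem nielsen_implies_bounded_shadowing {X : Type*} [MetricSpace X]
    {Γ : Type*} [Group Γ] [MulAction Γ X]
    (hiso : ∀ γ : Γ, Isometry (fun x : X => γ • x))
    (F G : Equiv.Perm X)
    (hconj : ∀ (γ : Γ) (k : ℤ), ∃ γ' : Γ,
      (∀ x : X, (F ^ k) (γ • x) = γ' • (F ^ k) x) ∧
      (∀ x : X, (G ^ k) (γ • x) = γ' • (G ^ k) x))
    (x y : X) (t : Γ) (n : ℕ) (hn : 1 ≤ n)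
    (hFx : (F ^ n) x = t • x) (hGy : (G ^ n) y = t • y) :
    (Set.range fun k : ℤ => dist ((F ^ k) x) ((G ^ k) y)).Finite ∧
    (∀ k : ℤ, dist ((F ^ k) x) ((G ^ k) y)
        = dist ((F ^ (k % (n : ℤ))) x) ((G ^ (k % (n : ℤ))) y)) ∧
    ∃ B : ℝ, ∀ k : ℤ, dist ((F ^ k) x) ((G ^ k) y) ≤ B := by
  set f : ℤ → ℝ := fun k => dist ((F ^ k) x) ((G ^ k) y) with hf
  have hper : Function.Periodic f (n : ℤ) := by
    intro k
    obtain ⟨γ', hF', hG'⟩ := hconj t k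
    have h1 : (F ^ (k + (n : ℤ))) x = γ' • (F ^ k) x := by
      rw [zpow_add, Equiv.Perm.mul_apply, zpow_natCast, hFx, hF']
    have h2 : (G ^ (k + (n : ℤ))) y = γ' • (G ^ k) y := by
      rw [zpow_add, Equiv.Perm.mul_apply, zpow_natCast, hGy, hG']
    simp only [hf, h1, h2]
    exact (hiso γ').dist_eq _ _
  have hnpos : (0 : ℤ) < (n : ℤ) := by exact_mod_cast hn
  have hmod : ∀ k : ℤ, f k = f (k % (n : ℤ)) := by
    intro k
    have : f (k % (n : ℤ)) = f (k - (n : ℤ) * (k / (n : ℤ))) := by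
      rw [Int.emod_def]
    rw [this, mul_comm, ← smul_eq_mul]; exact (hper.sub_zsmul_eq _).symm
  have hsub : Set.range f ⊆ f '' Set.Icc 0 (n : ℤ) := by
    rintro r ⟨k, rfl⟩
    exact ⟨k % (n : ℤ), ⟨Int.emod_nonneg k hnpos.ne', le_of_lt (Int.emod_lt_of_pos k hnpos)⟩,
      (hmod k).symm⟩
  have hfin : (Set.range f).Finite :=
    ((Set.finite_Icc (0 : ℤ) (n : ℤ)).image f).subset hsub
  refine ⟨hfin, hmod, ?_⟩
  obtain ⟨B, hB⟩ := hfin.bddAbove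
  exact ⟨B, fun k => hB ⟨k, rfl⟩⟩
end

section
/- Let (X̃, d) be a metric space, F̃, G̃ : X̃ → X̃ bijections, and suppose there exist functions dₛ, dᵤ : X̃ × X̃ → [0,∞) with d = sqrt(dₛ² + dᵤ²), a constant λ > 1, and R ≥ 0 such that dᵤ(F̃x, G̃y) ≥ λ·dᵤ(x,y) − R and dₛ(F̃⁻¹x, G̃⁻¹y) ≥ λ·dₛ(x,y) − R for all x,y. Set K = 2(R+1)/(λ−1). If dᵤ(x,y) > K/2 then dᵤ(F̃x, G̃y) > dᵤ(x,y) + 1; if dₛ(x,y) > K/2 then dₛ(F̃⁻¹x, G̃⁻¹y) > dₛ(x,y) + 1. Consequently, if sup_{k∈ℤ} d(F̃ᵏx, G̃ᵏy) < ∞, then dᵤ(F̃ᵏx, G̃ᵏy) ≤ K/2 and dₛ(F̃ᵏx, G̃ᵏy) ≤ K/2 for all k ∈ ℤ, and hence sup_{k∈ℤ} d(F̃ᵏx, G̃ᵏy) ≤ K. -/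
theorem uniform_shadowing_constant {X : Type*} [MetricSpace X]
    (F G : Equiv.Perm X) (ds du : X → X → ℝ)
    (hds : ∀ x y, 0 ≤ ds x y) (hdu : ∀ x y, 0 ≤ du x y)
    (hd : ∀ x y : X, dist x y = Real.sqrt ((ds x y) ^ 2 + (du x y) ^ 2))
    (lam R : ℝ) (hlam : 1 < lam) (hR : 0 ≤ R)
    (hu : ∀ x y : X, lam * du x y - R ≤ du (F x) (G y))
    (hs : ∀ x y : X, lam * ds x y - R ≤ ds (F⁻¹ x) (G⁻¹ y)) :
    (∀ x y : X, 2 * (R + 1) / (lam - 1) / 2 < du x y →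
        du x y + 1 < du (F x) (G y)) ∧
    (∀ x y : X, 2 * (R + 1) / (lam - 1) / 2 < ds x y →
        ds x y + 1 < ds (F⁻¹ x) (G⁻¹ y)) ∧
    (∀ x y : X, (∃ B : ℝ, ∀ k : ℤ, dist ((F ^ k) x) ((G ^ k) y) ≤ B) →
      (∀ k : ℤ, du ((F ^ k) x) ((G ^ k) y) ≤ 2 * (R + 1) / (lam - 1) / 2 ∧
                 ds ((F ^ k) x) ((G ^ k) y) ≤ 2 * (R + 1) / (lam - 1) / 2) ∧
      ∀ k : ℤ, dist ((F ^ k) x) ((G ^ k) y) ≤ 2 * (R + 1) / (lam - 1)) := by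
  have hlam' : 0 < lam - 1 := by linarith
  set K2 : ℝ := 2 * (R + 1) / (lam - 1) / 2 with hK2def
  have hK2 : K2 = (R + 1) / (lam - 1) := by rw [hK2def]; ring
  have hK2pos : 0 < K2 := by
    rw [hK2]; positivity
  -- step lemmas
  have step_u : ∀ x y : X, K2 < du x y → du x y + 1 < du (F x) (G y) := by
    intro x y h
    have h1 : R + 1 < (lam - 1) * du x y := by
      rw [hK2, div_lt_iff₀ hlam'] at h
      nlinarith
    have := hu x y
    nlinarith
  have step_s : ∀ x y : X, K2 < ds x y → ds x y + 1 < ds (F⁻¹ x) (G⁻¹ y) := by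
    intro x y h
    have h1 : R + 1 < (lam - 1) * ds x y := by
      rw [hK2, div_lt_iff₀ hlam'] at h
      nlinarith
    have := hs x y
    nlinarith
  have hdu_le : ∀ a b : X, du a b ≤ dist a b := by
    intro a b
    rw [hd]
    have h := Real.sqrt_le_sqrt (show (du a b) ^ 2 ≤ (ds a b) ^ 2 + (du a b) ^ 2 by
      nlinarith [sq_nonneg (ds a b)])
    rwa [Real.sqrt_sq (hdu a b)] at h
  have hds_le : ∀ a b : X, ds a b ≤ dist a b := by
    intro a b
    rw [hd]
    have h := Real.sqrt_le_sqrt (show (ds a b) ^ 2 ≤ (ds a b) ^ 2 + (du a b) ^ 2 by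
      nlinarith [sq_nonneg (du a b)])
    rwa [Real.sqrt_sq (hds a b)] at h
  refine ⟨step_u, step_s, ?_⟩
  intro x y ⟨B, hB⟩
  have hmain : ∀ k : ℤ, du ((F ^ k) x) ((G ^ k) y) ≤ K2 ∧
      ds ((F ^ k) x) ((G ^ k) y) ≤ K2 := by
    intro k
    constructor
    · by_contra hcon
      push_neg at hcon
      have grow : ∀ n : ℕ, K2 < du ((F ^ (k + n)) x) ((G ^ (k + n)) y) ∧
          du ((F ^ k) x) ((G ^ k) y) + n ≤ du ((F ^ (k + n)) x) ((G ^ (k + n)) y) := by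
        intro n
        induction n with
        | zero =>
          constructor
          · simpa using hcon
          · simp
        | succ n ih =>
          have hxF : ((F ^ (k + (n + 1 : ℕ) : ℤ))) x = F (((F ^ (k + n : ℤ))) x) := by
            have : (k + (n + 1 : ℕ) : ℤ) = 1 + (k + n) := by push_cast; ring
            rw [this, zpow_add, zpow_one]
            rfl
          have hyG : ((G ^ (k + (n + 1 : ℕ) : ℤ))) y = G (((G ^ (k + n : ℤ))) y) := by
            have : (k + (n + 1 : ℕ) : ℤ) = 1 + (k + n) := by push_cast; ring
            rw [this, zpow_add, zpow_one]
            rfl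
          rw [hxF, hyG]
          have hstep := step_u _ _ ih.1
          constructor
          · linarith [ih.2]
          · push_cast
            push_cast at ih
            linarith [ih.2]
      obtain ⟨n, hn⟩ := exists_nat_gt B
      have h1 := (grow n).2
      have h2 := hdu_le ((F ^ (k + n)) x) ((G ^ (k + n)) y)
      have h3 := hB (k + n)
      have h4 := hdu x y
      linarith [hK2pos, hcon]
    · by_contra hcon
      push_neg at hcon
      have grow : ∀ n : ℕ, K2 < ds ((F ^ (k - n)) x) ((G ^ (k - n)) y) ∧
          ds ((F ^ k) x) ((G ^ k) y) + n ≤ ds ((F ^ (k - n)) x) ((G ^ (k - n)) y) := by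
        intro n
        induction n with
        | zero =>
          constructor
          · simpa using hcon
          · simp
        | succ n ih =>
          have hxF : ((F ^ (k - (n + 1 : ℕ) : ℤ))) x = F⁻¹ (((F ^ (k - n : ℤ))) x) := by
            have : (k - (n + 1 : ℕ) : ℤ) = -1 + (k - n) := by push_cast; ring
            rw [this, zpow_add, zpow_neg_one]
            rfl
          have hyG : ((G ^ (k - (n + 1 : ℕ) : ℤ))) y = G⁻¹ (((G ^ (k - n : ℤ))) y) := by
            have : (k - (n + 1 : ℕ) : ℤ) = -1 + (k - n) := by push_cast; ring
            rw [this, zpow_add, zpow_neg_one]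
            rfl
          rw [hxF, hyG]
          have hstep := step_s _ _ ih.1
          constructor
          · linarith [ih.2]
          · push_cast
            push_cast at ih
            linarith [ih.2]
      obtain ⟨n, hn⟩ := exists_nat_gt B
      have h1 := (grow n).2
      have h2 := hds_le ((F ^ (k - n)) x) ((G ^ (k - n)) y)
      have h3 := hB (k - n)
      linarith [hK2pos, hcon]
  refine ⟨hmain, ?_⟩
  intro k
  obtain ⟨h1, h2⟩ := hmain k
  rw [hd]
  have hK : (2 * (R + 1) / (lam - 1)) = 2 * K2 := by rw [hK2def]; ring
  rw [hK]
  have hsq : (ds ((F ^ k) x) ((G ^ k) y)) ^ 2 + (du ((F ^ k) x) ((G ^ k) y)) ^ 2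
      ≤ (2 * K2) ^ 2 := by
    nlinarith [hds ((F ^ k) x) ((G ^ k) y), hdu ((F ^ k) x) ((G ^ k) y), hK2pos]
  calc Real.sqrt ((ds ((F ^ k) x) ((G ^ k) y)) ^ 2 + (du ((F ^ k) x) ((G ^ k) y)) ^ 2)
      ≤ Real.sqrt ((2 * K2) ^ 2) := Real.sqrt_le_sqrt hsq
    _ = 2 * K2 := Real.sqrt_sq (by linarith)
end

section
/- Let (X̃, d) be a metric space with dₛ, dᵤ as above, F̃ : X̃ → X̃ a bijection, λ > 1, with dᵤ(F̃x,F̃y) ≥ λ dᵤ(x,y) and dₛ(F̃⁻¹x,F̃⁻¹y) ≥ λ dₛ(x,y), and dₛ, dᵤ separating points. If sup_{k∈ℤ} d(F̃ᵏx₁, F̃ᵏx₂) < ∞ then x₁ = x₂. -/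
theorem self_shadowing_trivial {X : Type*} [MetricSpace X]
    (F : Equiv.Perm X) (ds du : X → X → ℝ)
    (hds : ∀ x y, 0 ≤ ds x y) (hdu : ∀ x y, 0 ≤ du x y)
    (hd : ∀ x y : X, dist x y = Real.sqrt ((ds x y) ^ 2 + (du x y) ^ 2))
    (lam : ℝ) (hlam : 1 < lam)
    (hu : ∀ x y : X, lam * du x y ≤ du (F x) (F y))
    (hs : ∀ x y : X, lam * ds x y ≤ ds (F⁻¹ x) (F⁻¹ y))
    (hsep : ∀ x y : X, ds x y = 0 → du x y = 0 → x = y)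
    (x₁ x₂ : X)
    (hbdd : ∃ B : ℝ, ∀ k : ℤ, dist ((F ^ k) x₁) ((F ^ k) x₂) ≤ B) :
    x₁ = x₂ := by
  obtain ⟨B, hB⟩ := hbdd
  have hlam0 : (0:ℝ) < lam := lt_trans one_pos hlam
  have hds_le : ∀ x y : X, ds x y ≤ dist x y := by
    intro x y
    rw [hd]
    calc ds x y = Real.sqrt ((ds x y)^2) := (Real.sqrt_sq (hds x y)).symm
      _ ≤ _ := Real.sqrt_le_sqrt (by nlinarith [hdu x y, hds x y])
  have hdu_le : ∀ x y : X, du x y ≤ dist x y := by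
    intro x y
    rw [hd]
    calc du x y = Real.sqrt ((du x y)^2) := (Real.sqrt_sq (hdu x y)).symm
      _ ≤ _ := Real.sqrt_le_sqrt (by nlinarith [hdu x y, hds x y])
  -- growth lemmas
  have hgu : ∀ n : ℕ, lam ^ n * du x₁ x₂ ≤ du ((F ^ n) x₁) ((F ^ n) x₂) := by
    intro n
    induction n with
    | zero => simp
    | succ n ih =>
        have h1 : lam * (lam ^ n * du x₁ x₂) ≤ lam * du ((F ^ n) x₁) ((F ^ n) x₂) :=
          mul_le_mul_of_nonneg_left ih (le_of_lt hlam0)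
        have h2 := hu ((F ^ n) x₁) ((F ^ n) x₂)
        have he : ∀ z : X, (F ^ (n+1)) z = F ((F ^ n) z) := by
          intro z; rw [pow_succ']; rfl
        rw [he, he]
        calc lam ^ (n+1) * du x₁ x₂ = lam * (lam ^ n * du x₁ x₂) := by ring
          _ ≤ lam * du ((F ^ n) x₁) ((F ^ n) x₂) := h1
          _ ≤ _ := h2
  have hgs : ∀ n : ℕ, lam ^ n * ds x₁ x₂ ≤ ds ((F⁻¹ ^ n) x₁) ((F⁻¹ ^ n) x₂) := by
    intro n
    induction n with
    | zero => simp
    | succ n ih =>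
        have h1 : lam * (lam ^ n * ds x₁ x₂) ≤ lam * ds ((F⁻¹ ^ n) x₁) ((F⁻¹ ^ n) x₂) :=
          mul_le_mul_of_nonneg_left ih (le_of_lt hlam0)
        have h2 := hs ((F⁻¹ ^ n) x₁) ((F⁻¹ ^ n) x₂)
        have he : ∀ z : X, (F⁻¹ ^ (n+1)) z = F⁻¹ ((F⁻¹ ^ n) z) := by
          intro z; rw [pow_succ']; rfl
        rw [he, he]
        calc lam ^ (n+1) * ds x₁ x₂ = lam * (lam ^ n * ds x₁ x₂) := by ring
          _ ≤ lam * ds ((F⁻¹ ^ n) x₁) ((F⁻¹ ^ n) x₂) := h1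
          _ ≤ _ := h2
  have hdu0 : du x₁ x₂ = 0 := by
    by_contra h
    have hpos : 0 < du x₁ x₂ := lt_of_le_of_ne (hdu x₁ x₂) (Ne.symm h)
    obtain ⟨n, hn⟩ := pow_unbounded_of_one_lt (B / du x₁ x₂) hlam
    have hb : lam ^ n * du x₁ x₂ ≤ B := by
      calc lam ^ n * du x₁ x₂ ≤ du ((F ^ n) x₁) ((F ^ n) x₂) := hgu n
        _ ≤ dist ((F ^ n) x₁) ((F ^ n) x₂) := hdu_le _ _
        _ = dist ((F ^ (n:ℤ)) x₁) ((F ^ (n:ℤ)) x₂) := by rw [zpow_natCast]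
        _ ≤ B := hB n
    have : B / du x₁ x₂ < lam ^ n := hn
    rw [div_lt_iff₀ hpos] at this
    linarith
  have hds0 : ds x₁ x₂ = 0 := by
    by_contra h
    have hpos : 0 < ds x₁ x₂ := lt_of_le_of_ne (hds x₁ x₂) (Ne.symm h)
    obtain ⟨n, hn⟩ := pow_unbounded_of_one_lt (B / ds x₁ x₂) hlam
    have hb : lam ^ n * ds x₁ x₂ ≤ B := by
      calc lam ^ n * ds x₁ x₂ ≤ ds ((F⁻¹ ^ n) x₁) ((F⁻¹ ^ n) x₂) := hgs n
        _ ≤ dist ((F⁻¹ ^ n) x₁) ((F⁻¹ ^ n) x₂) := hds_le _ _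
        _ = dist ((F ^ (-(n:ℤ))) x₁) ((F ^ (-(n:ℤ))) x₂) := by
            rw [zpow_neg, zpow_natCast, inv_pow]
        _ ≤ B := hB (-(n:ℤ))
    have : B / ds x₁ x₂ < lam ^ n := hn
    rw [div_lt_iff₀ hpos] at this
    linarith
  exact hsep x₁ x₂ hds0 hdu0
end
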